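/- Fix bounded functions s_j : K_j → ℝ and t_i : V_i → ℝ with max{ max_j sup_{K_j}|s_j|, max_i sup_{V_i}|t_i| } < 1, and let Θ : (×_{j=1}^m B(K_j,Y)) × (×_{i=1}^n B(V_i,Y)) → B(X,Y) send (p,q) = ((p_1,…,p_m),(q_1,…,q_n)) to the unique fixed point f(p,q) of the affine RB operator Φ(p)(q)(s)(t). Then Θ is linear: for all scalars α, β ∈ ℝ and all tuples (p,q), (p̃,q̃), one has f(α(p,q) + β(p̃,q̃)) = α f(p,q) + β f(p̃,q̃). -/
import Mathlib


open Bornology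

/-- With fixed `s`, `t` whose sup norms are bounded by a common `σ < 1`,
the map `Θ : (p, q) ↦ f(p,q)` sending the tuples of bounded functions to the unique bounded
fixed point of the affine RB operator is linear:
`f(α(p,q) + β(p̃,q̃)) = α f(p,q) + β f(p̃,q̃)`. -/
theorem affine_RB_fixed_point_linear {X Y : Type*} [Nonempty X]
    [NormedAddCommGroup Y] [NormedSpace ℝ Y] [CompleteSpace Y]
    {m n : ℕ} (K : Set X) (Kj : Fin m → Set X) (V : Fin n → Set X)
    (b : Fin m → X → X) (u : Fin n → X → X)
    (hbinj : ∀ j, Set.InjOn (b j) (Kj j)) (huinj : ∀ i, Set.InjOn (u i) (V i))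
    (hKcov : (⋃ j, b j '' Kj j) = K)
    (hVcov : (⋃ i, u i '' V i) = Set.univ \ K)
    (hdisj : Pairwise (Function.onFun Disjoint
      (Sum.elim (fun j : Fin m => b j '' Kj j) (fun i : Fin n => u i '' V i))))
    (S : Fin m → X → ℝ) (T : Fin n → X → ℝ)
    (σ : ℝ) (hσ0 : 0 ≤ σ) (hσ : σ < 1)
    (hS : ∀ j, ∀ x ∈ Kj j, |S j x| ≤ σ) (hT : ∀ i, ∀ x ∈ V i, |T i x| ≤ σ)
    -- `F P Q` is the unique bounded fixed point of the affine RB operator `Φ(P)(Q)(S)(T)`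
    (F : (Fin m → X → Y) → (Fin n → X → Y) → (X → Y))
    (hF : ∀ (P : Fin m → X → Y) (Q : Fin n → X → Y),
      (∀ j, IsBounded (P j '' Kj j)) → (∀ i, IsBounded (Q i '' V i)) →
      IsBounded (Set.range (F P Q)) ∧
      (∀ j, ∀ x ∈ Kj j, F P Q (b j x) = P j x + S j x • F P Q x) ∧
      (∀ i, ∀ x ∈ V i, F P Q (u i x) = Q i x + T i x • F P Q x))
    (α β : ℝ) (P P' : Fin m → X → Y) (Q Q' : Fin n → X → Y)
    (hP : ∀ j, IsBounded (P j '' Kj j)) (hP' : ∀ j, IsBounded (P' j '' Kj j))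
    (hQ : ∀ i, IsBounded (Q i '' V i)) (hQ' : ∀ i, IsBounded (Q' i '' V i)) :
    F (fun j x => α • P j x + β • P' j x) (fun i x => α • Q i x + β • Q' i x)
      = fun x => α • F P Q x + β • F P' Q' x := by
  classical
  -- boundedness of the combined data
  have hPc : ∀ j, IsBounded ((fun x => α • P j x + β • P' j x) '' Kj j) := by
    intro j
    rw [isBounded_iff_forall_norm_le]
    obtain ⟨C, hC⟩ := isBounded_iff_forall_norm_le.mp (hP j)
    obtain ⟨C', hC'⟩ := isBounded_iff_forall_norm_le.mp (hP' j)
    refine ⟨|α| * C + |β| * C', ?_⟩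
    rintro _ ⟨x, hx, rfl⟩
    calc ‖α • P j x + β • P' j x‖ ≤ ‖α • P j x‖ + ‖β • P' j x‖ := norm_add_le _ _
      _ = |α| * ‖P j x‖ + |β| * ‖P' j x‖ := by rw [norm_smul, norm_smul, Real.norm_eq_abs, Real.norm_eq_abs]
      _ ≤ |α| * C + |β| * C' := by
          gcongr
          · exact hC _ ⟨x, hx, rfl⟩
          · exact hC' _ ⟨x, hx, rfl⟩
  have hQc : ∀ i, IsBounded ((fun x => α • Q i x + β • Q' i x) '' V i) := by
    intro i
    rw [isBounded_iff_forall_norm_le]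
    obtain ⟨C, hC⟩ := isBounded_iff_forall_norm_le.mp (hQ i)
    obtain ⟨C', hC'⟩ := isBounded_iff_forall_norm_le.mp (hQ' i)
    refine ⟨|α| * C + |β| * C', ?_⟩
    rintro _ ⟨x, hx, rfl⟩
    calc ‖α • Q i x + β • Q' i x‖ ≤ ‖α • Q i x‖ + ‖β • Q' i x‖ := norm_add_le _ _
      _ = |α| * ‖Q i x‖ + |β| * ‖Q' i x‖ := by rw [norm_smul, norm_smul, Real.norm_eq_abs, Real.norm_eq_abs]
      _ ≤ |α| * C + |β| * C' := by
          gcongr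
          · exact hC _ ⟨x, hx, rfl⟩
          · exact hC' _ ⟨x, hx, rfl⟩
  obtain ⟨hb1, hrec1b, hrec1u⟩ := hF _ _ hPc hQc
  obtain ⟨hb2, hrec2b, hrec2u⟩ := hF P Q hP hQ
  obtain ⟨hb3, hrec3b, hrec3u⟩ := hF P' Q' hP' hQ'
  set f1 := F (fun j x => α • P j x + β • P' j x) (fun i x => α • Q i x + β • Q' i x) with hf1
  set g := fun x => α • F P Q x + β • F P' Q' x with hg
  -- the difference
  set h := fun x => f1 x - g x with hh
  -- a bound on h
  rw [isBounded_iff_forall_norm_le] at hb1 hb2 hb3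
  obtain ⟨C1, hC1⟩ := hb1
  obtain ⟨C2, hC2⟩ := hb2
  obtain ⟨C3, hC3⟩ := hb3
  set M := C1 + (|α| * C2 + |β| * C3) with hM
  have hhM : ∀ x, ‖h x‖ ≤ M := by
    intro x
    calc ‖f1 x - g x‖ ≤ ‖f1 x‖ + ‖g x‖ := norm_sub_le _ _
      _ ≤ C1 + (|α| * C2 + |β| * C3) := by
          gcongr
          · exact hC1 _ ⟨x, rfl⟩
          · calc ‖α • F P Q x + β • F P' Q' x‖
                ≤ ‖α • F P Q x‖ + ‖β • F P' Q' x‖ := norm_add_le _ _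
              _ = |α| * ‖F P Q x‖ + |β| * ‖F P' Q' x‖ := by
                  rw [norm_smul, norm_smul, Real.norm_eq_abs, Real.norm_eq_abs]
              _ ≤ |α| * C2 + |β| * C3 := by
                  gcongr
                  · exact hC2 _ ⟨x, rfl⟩
                  · exact hC3 _ ⟨x, rfl⟩
  have hM0 : 0 ≤ M := le_trans (norm_nonneg _) (hhM (Classical.arbitrary X))
  -- h satisfies homogeneous recursions
  have hrecb : ∀ j, ∀ x ∈ Kj j, h (b j x) = S j x • h x := by
    intro j x hx
    have h1 := hrec1b j x hx
    have h2 := hrec2b j x hx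
    have h3 := hrec3b j x hx
    simp only [hh, hg, h1, h2, h3, smul_add, smul_sub, smul_smul, mul_comm]
    abel
  have hrecu : ∀ i, ∀ x ∈ V i, h (u i x) = T i x • h x := by
    intro i x hx
    have h1 := hrec1u i x hx
    have h2 := hrec2u i x hx
    have h3 := hrec3u i x hx
    simp only [hh, hg, h1, h2, h3, smul_add, smul_sub, smul_smul, mul_comm]
    abel
  -- iterate the bound
  have key : ∀ k : ℕ, ∀ x, ‖h x‖ ≤ σ ^ k * M := by
    intro k
    induction k with
    | zero => simpa using hhM
    | succ k ih =>
      intro x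
      by_cases hxK : x ∈ K
      · rw [← hKcov] at hxK
        obtain ⟨_, ⟨j, rfl⟩, y, hy, rfl⟩ := hxK
        rw [hrecb j y hy, norm_smul, Real.norm_eq_abs, pow_succ, mul_comm (σ ^ k) σ, mul_assoc]
        exact mul_le_mul (hS j y hy) (ih y) (norm_nonneg _)
          hσ0
      · have : x ∈ ⋃ i, u i '' V i := by rw [hVcov]; exact ⟨trivial, hxK⟩
        obtain ⟨_, ⟨i, rfl⟩, y, hy, rfl⟩ := this
        rw [hrecu i y hy, norm_smul, Real.norm_eq_abs, pow_succ, mul_comm (σ ^ k) σ, mul_assoc]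
        exact mul_le_mul (hT i y hy) (ih y) (norm_nonneg _) hσ0
  -- conclude h = 0
  funext x
  have hzero : ‖h x‖ ≤ 0 := by
    have htend : Filter.Tendsto (fun k : ℕ => σ ^ k * M) Filter.atTop (nhds 0) := by
      simpa using (tendsto_pow_atTop_nhds_zero_of_lt_one hσ0 hσ).mul_const M
    exact ge_of_tendsto' htend (fun k => key k x)
  have : h x = 0 := norm_le_zero_iff.mp hzero
  have := sub_eq_zero.mp this
  exact this
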